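/- arXiv:1911.04783 — 4 statements merged into one kernel-verified Lean document; each statement's English description precedes it below -/
import Mathlib

section
/- For any labelled digraph stacks S and T on Ω, the permutations inducing isomorphisms between the stacks coincide with those inducing isomorphisms between their squashed labelled digraphs: Iso(S, T) = Iso(Squash(S), Squash(T)). -/
attribute [local instance] Classical.propDecidable

/-- A (vertex- and arc-)labelled digraph on vertex set `Ω` with labels in `L`.
The arcs are the pairs on which `alabel` is not `none`. -/
structure LDigraph (Ω : Type*) (L : Type*) where
  vlabel : Ω → L
  alabel : Ω × Ω → Option L

namespace LDigraph

variable {Ω L : Type*}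

/-- The action of `Sym(Ω)` on labelled digraphs: `Γ.act g` is `Γ^g`. -/
def act (Γ : LDigraph Ω L) (g : Equiv.Perm Ω) : LDigraph Ω L where
  vlabel := fun δ => Γ.vlabel (g⁻¹ δ)
  alabel := fun p => Γ.alabel (g⁻¹ p.1, g⁻¹ p.2)

/-- The set of arcs of a labelled digraph. -/
def arcs (Γ : LDigraph Ω L) : Set (Ω × Ω) := {p | Γ.alabel p ≠ none}

/-- The set of permutations inducing an isomorphism from `Γ` to `Δ`. -/
def Iso (Γ Δ : LDigraph Ω L) : Set (Equiv.Perm Ω) := {g | Γ.act g = Δ}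

end LDigraph

/-- A labelled digraph stack on `Ω`: a finite list of labelled digraphs on `Ω`. -/
abbrev Stack (Ω L : Type*) := List (LDigraph Ω L)

namespace Stack

variable {Ω L : Type*}

/-- Entrywise action of `Sym(Ω)` on labelled digraph stacks. -/
def act (S : Stack Ω L) (g : Equiv.Perm Ω) : Stack Ω L := S.map (fun Γ => Γ.act g)

/-- The set of permutations inducing an isomorphism from the stack `S` to the stack `T`. -/
def Iso (S T : Stack Ω L) : Set (Equiv.Perm Ω) := {g | Stack.act S g = T}

/-- The squashed labelled digraph of a stack: arcs are the union of the arcs;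
a vertex label is the list of the vertex labels; an arc label is the list of
the arc labels, with `none` (the symbol `#`) for missing arcs. -/
noncomputable def squash (S : Stack Ω L) : LDigraph Ω (List (Option L)) where
  vlabel := fun δ => S.map (fun Γ => some (Γ.vlabel δ))
  alabel := fun p =>
    if ∀ Γ ∈ S, Γ.alabel p = none then none
    else some (S.map (fun Γ => Γ.alabel p))

end Stack

/-- `(fL, fR)` is a refiner for `U ⊆ Sym(Ω)`:
for all isomorphic stacks `S`, `T`, `U ∩ Iso(S,T) ⊆ U ∩ Iso(fL S, fR T)`. -/
def IsRefiner {Ω L : Type*} (U : Set (Equiv.Perm Ω))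
    (fL fR : Stack Ω L → Stack Ω L) : Prop :=
  ∀ S T : Stack Ω L, (Stack.Iso S T).Nonempty →
    U ∩ Stack.Iso S T ⊆ U ∩ Stack.Iso (fL S) (fR T)

lemma squash_act {Ω L : Type*} (S : Stack Ω L) (g : Equiv.Perm Ω) :
    Stack.squash (Stack.act S g) = (Stack.squash S).act g := by
  unfold Stack.squash Stack.act LDigraph.act
  simp only [List.map_map, LDigraph.mk.injEq]
  constructor
  · rfl
  · funext p
    simp [List.forall_mem_map, Function.comp_def]

lemma squash_inj {Ω L : Type*} [Nonempty Ω] {S T : Stack Ω L}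
    (h : Stack.squash S = Stack.squash T) : S = T := by
  obtain ⟨δ⟩ := ‹Nonempty Ω›
  have hv : ∀ δ : Ω, S.map (fun Γ => some (Γ.vlabel δ)) =
      T.map (fun Γ => some (Γ.vlabel δ)) := fun δ =>
    congrFun (congrArg LDigraph.vlabel h) δ
  have ha := congrArg LDigraph.alabel h
  have hlen : S.length = T.length := by
    have := congrArg List.length (hv δ); simpa using this
  apply List.ext_get hlen
  intro i h1 h2
  have hgetv : ∀ δ : Ω, (S.get ⟨i, h1⟩).vlabel δ = (T.get ⟨i, h2⟩).vlabel δ := by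
    intro δ
    have := congrArg (fun l => l[i]?) (hv δ)
    simp only [List.getElem?_map] at this
    rw [List.getElem?_eq_getElem h1, List.getElem?_eq_getElem h2] at this
    simpa using this
  have hgeta : ∀ p : Ω × Ω, (S.get ⟨i, h1⟩).alabel p = (T.get ⟨i, h2⟩).alabel p := by
    intro p
    have hp := congrFun ha p
    simp only [Stack.squash] at hp
    by_cases hS : ∀ Γ ∈ S, Γ.alabel p = none
    · rw [if_pos hS] at hp
      by_cases hT : ∀ Γ ∈ T, Γ.alabel p = none
      · rw [hS _ (List.get_mem S _), hT _ (List.get_mem T _)]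
      · rw [if_neg hT] at hp; exact absurd hp.symm (by simp)
    · rw [if_neg hS] at hp
      by_cases hT : ∀ Γ ∈ T, Γ.alabel p = none
      · rw [if_pos hT] at hp; exact absurd hp (by simp)
      · rw [if_neg hT] at hp
        have hl := Option.some_injective _ hp
        have := congrArg (fun l => l[i]?) hl
        simp only [List.getElem?_map] at this
        rw [List.getElem?_eq_getElem h1, List.getElem?_eq_getElem h2] at this
        simpa using this
  have h1' := (S.get ⟨i, h1⟩)
  cases hSi : S.get ⟨i, h1⟩ with
  | mk v a =>
    cases hTi : T.get ⟨i, h2⟩ with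
    | mk v' a' =>
      simp only [LDigraph.mk.injEq]
      constructor
      · funext δ; have := hgetv δ; rwa [hSi, hTi] at this
      · funext p; have := hgeta p; rwa [hSi, hTi] at this

/-- For any labelled digraph stacks `S` and `T` on `Ω`, the permutations inducing
isomorphisms between the stacks are exactly those inducing isomorphisms between
their squashed labelled digraphs: `Iso(S, T) = Iso(Squash(S), Squash(T))`. -/
theorem stmt7 {Ω L : Type*} [Finite Ω] [Nonempty Ω] (S T : Stack Ω L) :
    Stack.Iso S T = LDigraph.Iso (Stack.squash S) (Stack.squash T) := by
  ext g
  simp only [Stack.Iso, LDigraph.Iso, Set.mem_setOf_eq]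
  constructor
  · intro h
    rw [← squash_act, h]
  · intro h
    rw [← squash_act] at h
    exact squash_inj h
end

section
/- Let U ⊆ Sym(Ω) be non-empty, h ∈ U, and f, g functions on labelled digraph stacks. Then (f, g) is a refiner for U if and only if (f, f) is a refiner for Uh⁻¹ and g(S) = f(S^{h⁻¹})^h for all stacks S. In particular, for a subgroup G and coset Gh: (f, g) is a refiner for Gh iff (f, f) is a refiner for G and g(S) = f(S^{h⁻¹})^h. -/
attribute [local instance] Classical.propDecidable

lemma ldig_act_act {Ω L : Type*} (Γ : LDigraph Ω L) (a b : Equiv.Perm Ω) :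
    (Γ.act a).act b = Γ.act (b * a) := by
  unfold LDigraph.act
  congr 1 <;> funext x <;> simp [mul_inv_rev]

lemma ldig_act_one {Ω L : Type*} (Γ : LDigraph Ω L) : Γ.act 1 = Γ := by
  cases Γ; unfold LDigraph.act; simp

lemma stack_act_act {Ω L : Type*} (S : Stack Ω L) (a b : Equiv.Perm Ω) :
    Stack.act (Stack.act S a) b = Stack.act S (b * a) := by
  simp [Stack.act, List.map_map, Function.comp, ldig_act_act]

lemma stack_act_one {Ω L : Type*} (S : Stack Ω L) : Stack.act S 1 = S := by
  simp [Stack.act, ldig_act_one]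

lemma stack_act_cancel {Ω L : Type*} {S T : Stack Ω L} (x : Equiv.Perm Ω)
    (hx : Stack.act S x = Stack.act T x) : S = T := by
  have := congrArg (fun R => Stack.act R x⁻¹) hx
  simpa [stack_act_act, stack_act_one] using this

/-- Let `U ⊆ Sym(Ω)` be non-empty and `h ∈ U`.  Then `(f, g)` is a refiner for `U`
iff `(f, f)` is a refiner for `Uh⁻¹` and `g(S) = f(S^{h⁻¹})^h` for all stacks `S`.
In particular, for a subgroup `G` and the right coset `U = Gh`, `(f, g)` is a
refiner for `Gh` iff `(f, f)` is a refiner for `G` and `g(S) = f(S^{h⁻¹})^h`.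
(In the paper's convention the product `uh⁻¹` means "first `u`, then `h⁻¹`",
so `Uh⁻¹ = {h⁻¹ * u : u ∈ U}` and `Gh = {h * a : a ∈ G}` in Lean.) -/
theorem stmt12 {Ω L : Type*} [Finite Ω] (U : Set (Equiv.Perm Ω)) (hUne : U.Nonempty)
    (h : Equiv.Perm Ω) (hh : h ∈ U) (f g : Stack Ω L → Stack Ω L) :
    (IsRefiner U f g ↔
      (IsRefiner ((fun u => h⁻¹ * u) '' U) f f ∧
        ∀ S : Stack Ω L, g S = Stack.act (f (Stack.act S h⁻¹)) h)) ∧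
    (∀ G : Subgroup (Equiv.Perm Ω),
      U = (fun a => h * a) '' (G : Set (Equiv.Perm Ω)) →
      (IsRefiner U f g ↔
        (IsRefiner ((G : Set (Equiv.Perm Ω))) f f ∧
          ∀ S : Stack Ω L, g S = Stack.act (f (Stack.act S h⁻¹)) h))) := by
  have key : ∀ (V : Set (Equiv.Perm Ω)), h ∈ V →
      (IsRefiner V f g ↔
        (IsRefiner ((fun u => h⁻¹ * u) '' V) f f ∧
          ∀ S : Stack Ω L, g S = Stack.act (f (Stack.act S h⁻¹)) h)) := by
    intro V hhV
    constructor
    · intro hR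
      have geq : ∀ S : Stack Ω L, g S = Stack.act (f (Stack.act S h⁻¹)) h := by
        intro S
        have hiso : h ∈ Stack.Iso (Stack.act S h⁻¹) S := by
          simp [Stack.Iso, stack_act_act, stack_act_one]
        have := hR (Stack.act S h⁻¹) S ⟨h, hiso⟩ ⟨hhV, hiso⟩
        exact this.2.symm
      refine ⟨?_, geq⟩
      intro S T hne x hx
      obtain ⟨⟨u, huV, hux⟩, hxST⟩ := hx
      have hST : Stack.act S x = T := hxST
      have hu : u = h * x := by rw [← hux]; group
      have hiso2 : u ∈ Stack.Iso S (Stack.act T h) := by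
        simp only [Stack.Iso, Set.mem_setOf_eq, hu, ← stack_act_act, hST]
      have := hR S (Stack.act T h) ⟨u, hiso2⟩ ⟨huV, hiso2⟩
      have h2 : Stack.act (f S) u = g (Stack.act T h) := this.2
      rw [geq (Stack.act T h)] at h2
      have h3 : Stack.act (Stack.act T h) h⁻¹ = T := by
        simp [stack_act_act, stack_act_one]
      rw [h3, hu, ← stack_act_act] at h2
      have h4 : Stack.act (f S) x = f T := stack_act_cancel h h2
      exact ⟨⟨u, huV, hux⟩, h4⟩
    · rintro ⟨hRf, geq⟩ S T hne u hu
      obtain ⟨huV, hST⟩ := hu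
      have hST' : Stack.act S u = T := hST
      have hx : h⁻¹ * u ∈ Stack.Iso S (Stack.act T h⁻¹) := by
        simp only [Stack.Iso, Set.mem_setOf_eq, ← stack_act_act, hST']
      have := hRf S (Stack.act T h⁻¹) ⟨h⁻¹ * u, hx⟩
        ⟨⟨u, huV, rfl⟩, hx⟩
      have h2 : Stack.act (f S) (h⁻¹ * u) = f (Stack.act T h⁻¹) := this.2
      refine ⟨huV, ?_⟩
      show Stack.act (f S) u = g T
      rw [geq T, ← h2, stack_act_act]
      congr 1
      group
  refine ⟨key U hh, ?_⟩
  intro G hG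
  have hmem : h ∈ U := hh
  have hGset : (fun u => h⁻¹ * u) '' U = (G : Set (Equiv.Perm Ω)) := by
    rw [hG, ← Set.image_comp]
    ext a
    constructor
    · rintro ⟨b, hb, rfl⟩
      simpa using hb
    · intro ha
      exact ⟨a, ha, by simp⟩
  rw [key U hh, hGset]
end

section
/- A subset U ⊆ Sym(Ω) admits a perfect refiner if and only if U = Iso(S, T) for some labelled digraph stacks S and T on Ω. In particular, a non-empty subset admits a perfect refiner iff it is a right coset of the Sym(Ω)-induced automorphism group of some labelled digraph stack. -/
attribute [local instance] Classical.propDecidable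

/-- `(fL, fR)` is a perfect refiner for `U`:
`U ∩ Iso(S,T) = Iso(S ∥ fL S, T ∥ fR T)` for all stacks `S`, `T`. -/
def IsPerfectRefiner {Ω L : Type*} (U : Set (Equiv.Perm Ω))
    (fL fR : Stack Ω L → Stack Ω L) : Prop :=
  ∀ S T : Stack Ω L, U ∩ Stack.Iso S T = Stack.Iso (S ++ fL S) (T ++ fR T)

namespace StackAux

variable {Ω L : Type*}

lemma ldact_one (Γ : LDigraph Ω L) : Γ.act 1 = Γ := by
  cases Γ with
  | mk v a =>
    unfold LDigraph.act
    congr 1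

lemma ldact_act (Γ : LDigraph Ω L) (g h : Equiv.Perm Ω) :
    (Γ.act g).act h = Γ.act (h * g) := by
  unfold LDigraph.act
  congr 1

lemma act_one (S : Stack Ω L) : S.act 1 = S := by
  simp [Stack.act, ldact_one]

lemma act_act (S : Stack Ω L) (g h : Equiv.Perm Ω) :
    (S.act g).act h = S.act (h * g) := by
  simp [Stack.act, List.map_map, Function.comp, ldact_act]

lemma length_act (S : Stack Ω L) (g : Equiv.Perm Ω) : (S.act g).length = S.length :=
  List.length_map _

lemma act_append (S S' : Stack Ω L) (g : Equiv.Perm Ω) :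
    (S ++ S').act g = S.act g ++ S'.act g :=
  List.map_append

lemma length_eq_of_mem_iso {S T : Stack Ω L} {g : Equiv.Perm Ω}
    (hg : g ∈ Stack.Iso S T) : S.length = T.length := by
  have := congrArg List.length hg
  simpa [length_act] using this

lemma iso_empty_of_length_ne {S T : Stack Ω L} (h : S.length ≠ T.length) :
    Stack.Iso S T = ∅ := by
  ext g
  simp only [Set.mem_empty_iff_false, iff_false]
  exact fun hg => h (length_eq_of_mem_iso hg)

lemma iso_append {S T S' T' : Stack Ω L} (h : S'.length = T'.length) :
    Stack.Iso (S ++ S') (T ++ T') = Stack.Iso S T ∩ Stack.Iso S' T' := by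
  ext g
  simp only [Stack.Iso, Set.mem_inter_iff, Set.mem_setOf_eq, act_append]
  constructor
  · intro hg
    have hlen : (S.act g).length = T.length := by
      have h1 := congrArg List.length hg
      simp only [List.length_append, length_act] at h1
      have := length_act S g
      omega
    exact List.append_inj hg hlen
  · rintro ⟨h1, h2⟩; rw [h1, h2]

end StackAux

/-- A subset `U ⊆ Sym(Ω)` admits a perfect refiner iff `U = Iso(S,T)` for some
labelled digraph stacks `S`, `T`; in particular a non-empty subset admits a perfect
refiner iff it is a right coset (`Aut(S)·g = {g * a : a ∈ Aut(S)}` in Lean's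
convention) of the automorphism group of some labelled digraph stack. -/
theorem stmt15 {Ω L : Type*} [Finite Ω] (U : Set (Equiv.Perm Ω)) :
    ((∃ fL fR : Stack Ω L → Stack Ω L, IsPerfectRefiner U fL fR) ↔
      ∃ S T : Stack Ω L, U = Stack.Iso S T) ∧
    (U.Nonempty →
      ((∃ fL fR : Stack Ω L → Stack Ω L, IsPerfectRefiner U fL fR) ↔
        ∃ (S : Stack Ω L) (g : Equiv.Perm Ω),
          U = (fun a => g * a) '' Stack.Iso S S)) := by
  open StackAux in
  have key : (∃ fL fR : Stack Ω L → Stack Ω L, IsPerfectRefiner U fL fR) ↔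
      ∃ S T : Stack Ω L, U = Stack.Iso S T := by
    constructor
    · rintro ⟨fL, fR, h⟩
      refine ⟨fL [], fR [], ?_⟩
      have h0 := h [] []
      have e1 : Stack.Iso ([] : Stack Ω L) [] = Set.univ := by
        ext g; simp [Stack.Iso, Stack.act]
      rw [e1, Set.inter_univ, List.nil_append, List.nil_append] at h0
      exact h0
    · rintro ⟨S₀, T₀, rfl⟩
      by_cases hlen : S₀.length = T₀.length
      · refine ⟨fun _ => S₀, fun _ => T₀, fun S T => ?_⟩
        rw [iso_append hlen, Set.inter_comm]
      · -- U = Iso S₀ T₀ = ∅ here; choose refiners making the iso always empty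
        refine ⟨fun S => S, fun T => T ++ [(S₀ ++ T₀).head (by
          intro hc
          rcases List.append_eq_nil_iff.mp hc with ⟨h1, h2⟩
          exact hlen (by rw [h1, h2]))], fun S T => ?_⟩
        have hU : Stack.Iso S₀ T₀ = ∅ := iso_empty_of_length_ne hlen
        rw [hU, Set.empty_inter]
        refine (iso_empty_of_length_ne ?_).symm
        simp only [List.length_append, List.length_cons, List.length_nil]
        omega
  refine ⟨key, fun hU => ?_⟩
  rw [key]
  constructor
  · rintro ⟨S, T, rfl⟩
    obtain ⟨g, hg⟩ := hU
    refine ⟨S, g, ?_⟩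
    ext h
    simp only [Set.mem_image, Stack.Iso, Set.mem_setOf_eq] at hg ⊢
    constructor
    · intro hh
      refine ⟨g⁻¹ * h, ?_, by group⟩
      rw [← act_act, hh, ← hg, act_act, inv_mul_cancel, act_one]
    · rintro ⟨a, ha, rfl⟩
      rw [← act_act, ha, hg]
  · rintro ⟨S, g, rfl⟩
    refine ⟨S, S.act g, ?_⟩
    ext h
    simp only [Set.mem_image, Stack.Iso, Set.mem_setOf_eq]
    constructor
    · rintro ⟨a, ha, rfl⟩
      rw [← act_act, ha]
    · intro hh
      refine ⟨g⁻¹ * h, ?_, by group⟩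
      rw [← act_act, hh, act_act, inv_mul_cancel, act_one]
end

section
/- Let Approx be an isomorphism approximator and f a function on labelled digraph stacks such that whenever |Approx(S,S)| ≥ 2 one has |Approx(S ∥ f(S), S ∥ f(S))| < |Approx(S,S)|. For stacks S, T with |Approx(S,T)| ≥ 2, let T₁,…,T_m be an enumeration of {f(S)^g : g ∈ Approx(S,T)} (with T₁ = f(S) when S = T), and define Split(S,T) = [(f(S), T₁), …, (f(S), T_m)]. Then Iso(S,T) is the disjoint union of the sets Iso(S ∥ f(S), T ∥ T_i) over i = 1,…,m, and each |Approx(S ∥ f(S), T ∥ T_i)| < |Approx(S,T)|. -/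
attribute [local instance] Classical.propDecidable

/-- Splitters from orbit enumeration (Lemma `lem-splitter-creator`): let `Approx` be
an isomorphism approximator (it contains `Iso`, is `∅` for stacks of unequal length,
and each non-empty value is a right coset `Approx(S,S)·h = {h * a : a ∈ Approx(S,S)}`
of `Approx(S,S)`), and let `f` satisfy: if `|Approx(S,S)| ≥ 2` then
`|Approx(S ∥ f S, S ∥ f S)| < |Approx(S,S)|`.  If `|Approx(S,T)| ≥ 2` and
`T₁,…,T_m` enumerates `{f(S)^g : g ∈ Approx(S,T)}` (with `T₁ = f S` when `S = T`),
then `Iso(S,T)` is the disjoint union of the sets `Iso(S ∥ f S, T ∥ Tᵢ)`, and each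
`|Approx(S ∥ f S, T ∥ Tᵢ)| < |Approx(S,T)|`. -/
theorem stmt18 {Ω L : Type*} [Finite Ω]
    (Approx : Stack Ω L → Stack Ω L → Set (Equiv.Perm Ω))
    (hA1 : ∀ S T : Stack Ω L, Stack.Iso S T ⊆ Approx S T)
    (hA2 : ∀ S T : Stack Ω L, S.length ≠ T.length → Approx S T = ∅)
    (hA3 : ∀ S T : Stack Ω L, (Approx S T).Nonempty →
      ∃ h : Equiv.Perm Ω, Approx S T = (fun a => h * a) '' Approx S S)
    (f : Stack Ω L → Stack Ω L)
    (hf : ∀ S : Stack Ω L, 2 ≤ (Approx S S).ncard →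
      (Approx (S ++ f S) (S ++ f S)).ncard < (Approx S S).ncard)
    (S T : Stack Ω L) (hST : 2 ≤ (Approx S T).ncard)
    (Ts : List (Stack Ω L)) (hTsNodup : Ts.Nodup)
    (hTs : ∀ X : Stack Ω L, X ∈ Ts ↔ ∃ g ∈ Approx S T, Stack.act (f S) g = X)
    (hTs1 : S = T → Ts.head? = some (f S)) :
    Stack.Iso S T = (⋃ X ∈ Ts, Stack.Iso (S ++ f S) (T ++ X)) ∧
    (∀ X ∈ Ts, ∀ Y ∈ Ts, X ≠ Y →
      Disjoint (Stack.Iso (S ++ f S) (T ++ X)) (Stack.Iso (S ++ f S) (T ++ Y))) ∧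
    (∀ X ∈ Ts, (Approx (S ++ f S) (T ++ X)).ncard < (Approx S T).ncard) := by
  constructor
  · -- union
    ext g
    simp only [Set.mem_iUnion, exists_prop]
    constructor
    · intro hg
      refine ⟨Stack.act (f S) g, (hTs _).2 ⟨g, hA1 S T hg, rfl⟩, ?_⟩
      show Stack.act (S ++ f S) g = T ++ Stack.act (f S) g
      simp only [Stack.act, List.map_append]
      exact congrArg (· ++ _) hg
    · rintro ⟨X, hX, hg⟩
      obtain ⟨g', _, hg'⟩ := (hTs X).1 hX
      have hlen : (Stack.act (f S) g).length = X.length := by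
        simp [Stack.act, ← hg']
      have : Stack.act S g ++ Stack.act (f S) g = T ++ X := by
        simpa only [Stack.Iso, Set.mem_setOf_eq, Stack.act, List.map_append] using hg
      exact (List.append_inj' this hlen).1
  constructor
  · -- disjoint
    intro X _ Y _ hXY
    rw [Set.disjoint_left]
    intro g hgX hgY
    apply hXY
    have hX : Stack.act S g ++ Stack.act (f S) g = T ++ X := by
      simpa only [Stack.Iso, Set.mem_setOf_eq, Stack.act, List.map_append] using hgX
    have hY : Stack.act S g ++ Stack.act (f S) g = T ++ Y := by
      simpa only [Stack.Iso, Set.mem_setOf_eq, Stack.act, List.map_append] using hgY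
    have := hX.symm.trans hY
    exact (List.append_inj this rfl).2
  · -- cardinality
    intro X hX
    rcases Set.eq_empty_or_nonempty (Approx (S ++ f S) (T ++ X)) with h | h
    · rw [h]; simpa using lt_of_lt_of_le (by norm_num) hST
    · have : Finite (Equiv.Perm Ω) := by infer_instance
      obtain ⟨h1, hh1⟩ := hA3 (S ++ f S) (T ++ X) h
      have hSTne : (Approx S T).Nonempty := by
        apply Set.nonempty_of_ncard_ne_zero; omega
      obtain ⟨h2, hh2⟩ := hA3 S T hSTne
      have hinj : ∀ (c : Equiv.Perm Ω) (A : Set (Equiv.Perm Ω)),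
          ((fun a => c * a) '' A).ncard = A.ncard := fun c A =>
        Set.ncard_image_of_injective A (mul_right_injective c)
      have e1 : (Approx (S ++ f S) (T ++ X)).ncard
          = (Approx (S ++ f S) (S ++ f S)).ncard := by rw [hh1, hinj]
      have e2 : (Approx S T).ncard = (Approx S S).ncard := by rw [hh2, hinj]
      rw [e1, e2]
      exact hf S (e2 ▸ hST)
end
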